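/- Let M be a closed Riemannian manifold, let x and y be points of M, and fix a minimizing geodesic ρ from x to y. For a loop γ based at x, apply a length-nonincreasing curve-shortening process in the space of paths from x to y to the path γ*ρ, and let τ be the geodesic from x to y thus obtained (the obstructing geodesic of γ). If two loops γ_1 and γ_2 based at x have the same obstructing geodesic τ, then γ_1 and γ_2 can be connected by a homotopy through loops based at x of length at most max{length(γ_1), length(γ_2)} + 2·dist(x,y). -/

import Mathlib

/-!
We model a closed Riemannian manifold `M^n` as a compact metric space carrying a smooth
manifold structure (charted over `ℝ^n`, without boundary) whose distance is the intrinsic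
(Riemannian) distance; the latter is encoded by the hypothesis `hgeo` that any two points
are joined by a minimizing geodesic realizing the distance (Hopf–Rinow for closed
Riemannian manifolds).  Geodesics are formalized metrically: a geodesic is a constant
speed path which is locally an isometry up to its speed factor, i.e. a locally
length-minimizing curve parametrized proportionally to arc length on `[0,1]`; hence two
geodesics are distinct (as curves up to reparametrization) iff they are unequal as paths.
-/

open scoped Manifold unitInterval ENNReal
open Metric

noncomputable section

/-- The length of a path in a metric space, defined as its total variation. -/
def pathLength {M : Type*} [PseudoMetricSpace M] {x y : M} (γ : Path x y) : ℝ≥0∞ :=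
  eVariationOn γ Set.univ

/-- A path `γ : [0,1] → M` is a *geodesic (segment)* if it has constant speed `c ≥ 0` and
is locally an isometry up to the factor `c`; this is the metric formulation of a locally
length-minimizing curve parametrized proportionally to arc length.  For a loop (`x = y`)
no condition is imposed "across" the base point, so a geodesic loop need not be smooth at
its base point. -/
def IsGeodesic {M : Type*} [MetricSpace M] {x y : M} (γ : Path x y) : Prop :=
  ∃ c : ℝ, 0 ≤ c ∧ ∀ t : I, ∃ ε > 0, ∀ s s' : I,
    |(s : ℝ) - (t : ℝ)| < ε → |(s' : ℝ) - (t : ℝ)| < ε →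
      dist (γ s) (γ s') = c * |(s : ℝ) - (s' : ℝ)|

end

noncomputable section

/-- `τ` is the *obstructing geodesic* of the loop `γ` based at `x` (with respect to the
fixed minimizing geodesic `ρ` from `x` to `y`) if `τ` is a geodesic from `x` to `y`
obtained from `γ * ρ` by a curve-shortening process on the space of paths from `x` to `y`:
a deformation fixing the endpoints (a path homotopy) along which the length does not
increase. -/
def IsObstructingGeodesic {M : Type*} [MetricSpace M] {x y : M}
    (γ : Path x x) (ρ τ : Path x y) : Prop :=
  IsGeodesic τ ∧ ∃ H : Path.Homotopy (γ.trans ρ) τ,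
    ∀ s s' : I, s ≤ s' → pathLength (H.eval s') ≤ pathLength (H.eval s)

end

noncomputable section

namespace ObstructingAux
open scoped unitInterval ENNReal
open Set

variable {X : Type*} [MetricSpace X] {a b c d e f : X}

lemma Icc_eq_univ : (Set.Icc (0:I) 1) = Set.univ := by
  ext t
  simp only [Set.mem_Icc, Set.mem_univ, iff_true]
  exact ⟨t.2.1, t.2.2⟩

lemma le_of_reparam (q : Path a b) (p : Path c d)
    (σ' : I → I) (hσ : Monotone σ') (h : ∀ t, q t = p (σ' t)) :
    pathLength q ≤ pathLength p :=
  calc pathLength q = eVariationOn (⇑p ∘ σ') Set.univ :=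
        eVariationOn.eq_of_eqOn (fun t _ => h t)
    _ = eVariationOn (⇑p) (σ' '' Set.univ) :=
        eVariationOn.comp_eq_of_monotoneOn _ _ (hσ.monotoneOn _)
    _ ≤ eVariationOn (⇑p) Set.univ := eVariationOn.mono _ (Set.subset_univ _)

lemma le_of_split (q : Path a b) (p₁ : Path c d) (p₂ : Path e f)
    (m : I) (σ₁ σ₂ : I → I)
    (hσ₁ : MonotoneOn σ₁ (Set.Icc 0 m)) (hσ₂ : MonotoneOn σ₂ (Set.Icc m 1))
    (h₁ : ∀ t ∈ Set.Icc (0:I) m, q t = p₁ (σ₁ t))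
    (h₂ : ∀ t ∈ Set.Icc m (1:I), q t = p₂ (σ₂ t)) :
    pathLength q ≤ pathLength p₁ + pathLength p₂ := by
  have key := eVariationOn.Icc_add_Icc (⇑q) (s := (Set.univ : Set I))
    (a := 0) (b := m) (c := 1) m.2.1 m.2.2 (Set.mem_univ m)
  simp only [Set.univ_inter] at key
  rw [Icc_eq_univ] at key
  have e1 : eVariationOn (⇑q) (Set.Icc 0 m) ≤ pathLength p₁ :=
    calc eVariationOn (⇑q) (Set.Icc 0 m) = eVariationOn (⇑p₁ ∘ σ₁) (Set.Icc 0 m) :=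
          eVariationOn.eq_of_eqOn h₁
      _ = eVariationOn (⇑p₁) (σ₁ '' Set.Icc 0 m) := eVariationOn.comp_eq_of_monotoneOn _ _ hσ₁
      _ ≤ eVariationOn (⇑p₁) Set.univ := eVariationOn.mono _ (Set.subset_univ _)
  have e2 : eVariationOn (⇑q) (Set.Icc m 1) ≤ pathLength p₂ :=
    calc eVariationOn (⇑q) (Set.Icc m 1) = eVariationOn (⇑p₂ ∘ σ₂) (Set.Icc m 1) :=
          eVariationOn.eq_of_eqOn h₂
      _ = eVariationOn (⇑p₂) (σ₂ '' Set.Icc m 1) := eVariationOn.comp_eq_of_monotoneOn _ _ hσ₂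
      _ ≤ eVariationOn (⇑p₂) Set.univ := eVariationOn.mono _ (Set.subset_univ _)
  calc pathLength q = eVariationOn (⇑q) (Set.Icc 0 m) + eVariationOn (⇑q) (Set.Icc m 1) :=
        key.symm
    _ ≤ pathLength p₁ + pathLength p₂ := add_le_add e1 e2

lemma symm_length (p : Path a b) : pathLength p.symm = pathLength p := by
  have hanti : AntitoneOn (unitInterval.symm) (Set.univ : Set I) := by
    intro s _ t _ h
    simpa using h
  calc pathLength p.symm = eVariationOn (⇑p ∘ unitInterval.symm) Set.univ := rfl
    _ = eVariationOn (⇑p) (unitInterval.symm '' Set.univ) :=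
        eVariationOn.comp_eq_of_antitoneOn _ _ hanti
    _ = pathLength p := by
        rw [Set.image_univ, (unitInterval.symm_involutive.surjective).range_eq]
        rfl

lemma proj2 : Monotone (fun t : I => Set.projIcc (0:ℝ) 1 zero_le_one (2*(t:ℝ))) :=
  fun s t h => by
    dsimp only
    have h2 : (2*(s:ℝ)) ≤ 2*(t:ℝ) := by have := Subtype.coe_le_coe.2 h; linarith
    exact Set.monotone_projIcc zero_le_one h2

lemma proj2' : Monotone (fun t : I => Set.projIcc (0:ℝ) 1 zero_le_one (2*(t:ℝ)-1)) :=
  fun s t h => by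
    dsimp only
    have h2 : (2*(s:ℝ)-1) ≤ 2*(t:ℝ)-1 := by have := Subtype.coe_le_coe.2 h; linarith
    exact Set.monotone_projIcc zero_le_one h2

lemma trans_le (p : Path a b) (r : Path b c) :
    pathLength (p.trans r) ≤ pathLength p + pathLength r := by
  refine le_of_split _ p r ⟨1/2, by norm_num, by norm_num⟩
    (fun t => Set.projIcc (0:ℝ) 1 zero_le_one (2*(t:ℝ)))
    (fun t => Set.projIcc (0:ℝ) 1 zero_le_one (2*(t:ℝ)-1))
    (proj2.monotoneOn _) (proj2'.monotoneOn _) ?_ ?_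
  · intro t ht
    have h : (t:ℝ) ≤ 1/2 := Subtype.coe_le_coe.2 ht.2
    show (if (t:ℝ) ≤ 1/2 then p.extend (2*t) else r.extend (2*t-1)) = _
    rw [if_pos h]; rfl
  · intro t ht
    have h : (1:ℝ)/2 ≤ (t:ℝ) := Subtype.coe_le_coe.2 ht.1
    show (if (t:ℝ) ≤ 1/2 then p.extend (2*t) else r.extend (2*t-1)) = _
    rcases lt_or_eq_of_le h with h' | h'
    · rw [if_neg (by linarith)]; rfl
    · rw [if_pos (le_of_eq h'.symm)]
      show p.extend (2*t) = r (Set.projIcc (0:ℝ) 1 zero_le_one (2*(t:ℝ)-1))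
      have h1 : (2*(t:ℝ)-1) = 0 := by linarith
      have h2 : (2*(t:ℝ)) = 1 := by linarith
      rw [h1, h2, Set.projIcc_left]
      show p.extend 1 = r 0
      simp

lemma symm_eval {p q : Path a b} (F : Path.Homotopy p q) (s : I) :
    F.symm.eval s = F.eval (σ s) := by
  ext t; rfl

lemma hcomp_eval_le {p₀ q₀ : Path a b} {p₁ q₁ : Path b c}
    (F : Path.Homotopy p₀ q₀) (G : Path.Homotopy p₁ q₁) (s : I) :
    pathLength ((F.hcomp G).eval s) ≤ pathLength (F.eval s) + pathLength (G.eval s) := by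
  refine le_of_split _ (F.eval s) (G.eval s) ⟨1/2, by norm_num, by norm_num⟩
    (fun t => Set.projIcc (0:ℝ) 1 zero_le_one (2*(t:ℝ)))
    (fun t => Set.projIcc (0:ℝ) 1 zero_le_one (2*(t:ℝ)-1))
    (proj2.monotoneOn _) (proj2'.monotoneOn _) ?_ ?_
  · intro t ht
    have h : (t:ℝ) ≤ 1/2 := Subtype.coe_le_coe.2 ht.2
    show (if (t:ℝ) ≤ 1/2 then (F.eval s).extend (2*t) else (G.eval s).extend (2*t-1)) = _
    rw [if_pos h]; rfl
  · intro t ht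
    have h : (1:ℝ)/2 ≤ (t:ℝ) := Subtype.coe_le_coe.2 ht.1
    show (if (t:ℝ) ≤ 1/2 then (F.eval s).extend (2*t) else (G.eval s).extend (2*t-1)) = _
    rcases lt_or_eq_of_le h with h' | h'
    · rw [if_neg (by linarith)]; rfl
    · rw [if_pos (le_of_eq h'.symm)]
      show (F.eval s).extend (2*t) = (G.eval s) (Set.projIcc (0:ℝ) 1 zero_le_one (2*(t:ℝ)-1))
      have h1 : (2*(t:ℝ)-1) = 0 := by linarith
      have h2 : (2*(t:ℝ)) = 1 := by linarith
      rw [h1, h2, Set.projIcc_left]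
      show (F.eval s).extend 1 = (G.eval s) 0
      simp

lemma trans_eval_le {p₀ p₁ p₂ : Path a b} (F : Path.Homotopy p₀ p₁) (G : Path.Homotopy p₁ p₂)
    {B : ℝ≥0∞} (hF : ∀ u, pathLength (F.eval u) ≤ B) (hG : ∀ u, pathLength (G.eval u) ≤ B)
    (s : I) : pathLength ((F.trans G).eval s) ≤ B := by
  rcases le_or_gt (s:ℝ) (1/2) with h | h
  · have e : (F.trans G).eval s
        = F.eval ⟨2*s, (unitInterval.mul_pos_mem_iff zero_lt_two).2 ⟨s.2.1, h⟩⟩ := by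
      ext t
      show (F.trans G) (s, t) = _
      rw [Path.Homotopy.trans_apply]
      rw [dif_pos h]
      rfl
    rw [e]; exact hF _
  · have e : (F.trans G).eval s
        = G.eval ⟨2*s-1, unitInterval.two_mul_sub_one_mem_iff.2 ⟨h.le, s.2.2⟩⟩ := by
      ext t
      show (F.trans G) (s, t) = _
      rw [Path.Homotopy.trans_apply, dif_neg (not_le.2 h)]
      rfl
    rw [e]; exact hG _

lemma reparam_eval_le (p : Path a b) (f : I → I) (hf : Continuous f) (hf₀ : f 0 = 0)
    (hf₁ : f 1 = 1) (hmono : Monotone f) (s : I) :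
    pathLength ((Path.Homotopy.reparam p f hf hf₀ hf₁).eval s) ≤ pathLength p := by
  refine le_of_reparam _ p
    (fun t => ⟨(σ s : ℝ) * t + s * f t,
      show (σ s : ℝ) • (t : ℝ) + (s : ℝ) • ((f t) : ℝ) ∈ I from
        convex_Icc _ _ t.2 (f t).2 (by unit_interval) (by unit_interval) (by simp)⟩)
    ?_ (fun t => rfl)
  intro t t' h
  have hc : (t:ℝ) ≤ t' := Subtype.coe_le_coe.2 h
  have hf' : ((f t : I) : ℝ) ≤ (f t' : I) := Subtype.coe_le_coe.2 (hmono h)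
  rw [Subtype.mk_le_mk]
  have h1 : (0:ℝ) ≤ (σ s : ℝ) := (σ s).2.1
  have h2 : (0:ℝ) ≤ (s : ℝ) := s.2.1
  exact add_le_add (mul_le_mul_of_nonneg_left hc h1) (mul_le_mul_of_nonneg_left hf' h2)

lemma reflTransSymm_eval_le (p : Path a b) (s : I) :
    pathLength ((Path.Homotopy.reflTransSymm p).eval s)
      ≤ pathLength p + pathLength p.symm := by
  refine le_of_split _ p p.symm ⟨1/2, by norm_num, by norm_num⟩
    (fun t => Set.projIcc (0:ℝ) 1 zero_le_one ((s:ℝ)*2*t))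
    (fun t => unitInterval.symm (Set.projIcc (0:ℝ) 1 zero_le_one ((s:ℝ)*(2-2*t))))
    ?_ ?_ ?_ ?_
  · intro t _ t' _ h
    have hc : (t:ℝ) ≤ t' := Subtype.coe_le_coe.2 h
    dsimp only
    have h2 : (s:ℝ)*2*t ≤ (s:ℝ)*2*t' := by nlinarith [s.2.1]
    exact Set.monotone_projIcc zero_le_one h2
  · intro t _ t' _ h
    have hc : (t:ℝ) ≤ t' := Subtype.coe_le_coe.2 h
    dsimp only
    have h2 : (s:ℝ)*(2-2*t') ≤ (s:ℝ)*(2-2*t) := by nlinarith [s.2.1]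
    have h3 := Subtype.coe_le_coe.2 (Set.monotone_projIcc zero_le_one h2)
    refine Subtype.coe_le_coe.1 ?_
    rw [unitInterval.coe_symm_eq, unitInterval.coe_symm_eq]
    linarith
  · intro t ht
    have hle : (t:ℝ) ≤ 1/2 := Subtype.coe_le_coe.2 ht.2
    have hmem : (s:ℝ)*2*t ∈ Set.Icc (0:ℝ) 1 := by
      constructor
      · have := s.2.1; have := t.2.1; positivity
      · nlinarith [s.2.2, s.2.1, t.2.1]
    show p ⟨Path.Homotopy.reflTransSymmAux (s,t), Path.Homotopy.reflTransSymmAux_mem_I _⟩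
        = p (Set.projIcc (0:ℝ) 1 zero_le_one ((s:ℝ)*2*t))
    rw [Set.projIcc_of_mem _ hmem]
    congr 1
    refine Subtype.ext ?_
    show Path.Homotopy.reflTransSymmAux (s,t) = (s:ℝ)*2*t
    unfold Path.Homotopy.reflTransSymmAux
    rw [if_pos hle]
  · intro t ht
    have hge : (1:ℝ)/2 ≤ (t:ℝ) := Subtype.coe_le_coe.2 ht.1
    have hmem : (s:ℝ)*(2-2*t) ∈ Set.Icc (0:ℝ) 1 := by
      constructor
      · nlinarith [s.2.1, t.2.2]
      · nlinarith [s.2.2, s.2.1, t.2.2]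
    show p ⟨Path.Homotopy.reflTransSymmAux (s,t), Path.Homotopy.reflTransSymmAux_mem_I _⟩
        = p.symm (unitInterval.symm (Set.projIcc (0:ℝ) 1 zero_le_one ((s:ℝ)*(2-2*t))))
    show _ = p (σ (σ (Set.projIcc (0:ℝ) 1 zero_le_one ((s:ℝ)*(2-2*t)))))
    rw [unitInterval.symm_symm, Set.projIcc_of_mem _ hmem]
    congr 1
    refine Subtype.ext ?_
    show Path.Homotopy.reflTransSymmAux (s,t) = (s:ℝ)*(2-2*t)
    unfold Path.Homotopy.reflTransSymmAux
    split_ifs with h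
    · have ht2 : (t:ℝ) = 1/2 := le_antisymm h hge
      rw [ht2]; ring
    · rfl

lemma mono_transRefl : Monotone (fun t : I =>
    (⟨Path.Homotopy.transReflReparamAux t, Path.Homotopy.transReflReparamAux_mem_I t⟩ : I)) := by
  intro t t' h
  have hc : (t:ℝ) ≤ t' := Subtype.coe_le_coe.2 h
  rw [Subtype.mk_le_mk]
  unfold Path.Homotopy.transReflReparamAux
  split_ifs <;> linarith [t.2.2, t'.2.2, t.2.1, t'.2.1]

lemma mono_transAssoc : Monotone (fun t : I =>
    (⟨Path.Homotopy.transAssocReparamAux t, Path.Homotopy.transAssocReparamAux_mem_I t⟩ : I)) := by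
  intro t t' h
  have hc : (t:ℝ) ≤ t' := Subtype.coe_le_coe.2 h
  rw [Subtype.mk_le_mk]
  unfold Path.Homotopy.transAssocReparamAux
  split_ifs <;> linarith [t.2.2, t'.2.2, t.2.1, t'.2.1]

lemma side {x y : X} (ρ : Path x y) (γ : Path x x) (τ : Path x y)
    (H : Path.Homotopy (γ.trans ρ) τ)
    (hH : ∀ s s' : I, s ≤ s' → pathLength (H.eval s') ≤ pathLength (H.eval s)) :
    ∃ K : Path.Homotopy γ (τ.trans ρ.symm),
      ∀ s, pathLength (K.eval s) ≤ pathLength γ + (pathLength ρ + pathLength ρ) := by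
  refine ⟨((Path.Homotopy.transRefl γ).symm).trans
    (((Path.Homotopy.refl γ).hcomp (Path.Homotopy.reflTransSymm ρ)).trans
      (((Path.Homotopy.transAssoc γ ρ ρ.symm).symm).trans
        (H.hcomp (Path.Homotopy.refl ρ.symm)))), ?_⟩
  have b1 : ∀ u, pathLength ((Path.Homotopy.transRefl γ).symm.eval u)
      ≤ pathLength γ + (pathLength ρ + pathLength ρ) := by
    intro u
    have e : (Path.Homotopy.transRefl γ).symm.eval u
        = (Path.Homotopy.reparam γ (fun t => ⟨Path.Homotopy.transReflReparamAux t,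
            Path.Homotopy.transReflReparamAux_mem_I t⟩) (by continuity)
            (Subtype.ext Path.Homotopy.transReflReparamAux_zero)
            (Subtype.ext Path.Homotopy.transReflReparamAux_one)).eval (σ (σ u)) := by
      ext t; rfl
    rw [e]
    exact le_trans (reparam_eval_le _ _ _ _ _ mono_transRefl _) (self_le_add_right _ _)
  have b2 : ∀ u, pathLength
      (((Path.Homotopy.refl γ).hcomp (Path.Homotopy.reflTransSymm ρ)).eval u)
      ≤ pathLength γ + (pathLength ρ + pathLength ρ) := by
    intro u
    refine le_trans (hcomp_eval_le _ _ u) ?_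
    have e : (Path.Homotopy.refl γ).eval u = γ := rfl
    rw [e]
    refine add_le_add le_rfl ?_
    refine le_trans (reflTransSymm_eval_le ρ u) ?_
    rw [symm_length]
  have b3 : ∀ u, pathLength ((Path.Homotopy.transAssoc γ ρ ρ.symm).symm.eval u)
      ≤ pathLength γ + (pathLength ρ + pathLength ρ) := by
    intro u
    have e : (Path.Homotopy.transAssoc γ ρ ρ.symm).symm.eval u
        = (Path.Homotopy.reparam (γ.trans (ρ.trans ρ.symm))
            (fun t => ⟨Path.Homotopy.transAssocReparamAux t,
              Path.Homotopy.transAssocReparamAux_mem_I t⟩) (by continuity)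
            (Subtype.ext Path.Homotopy.transAssocReparamAux_zero)
            (Subtype.ext Path.Homotopy.transAssocReparamAux_one)).eval (σ (σ u)) := by
      ext t; rfl
    rw [e]
    refine le_trans (reparam_eval_le _ _ _ _ _ mono_transAssoc _) ?_
    refine le_trans (trans_le _ _) (add_le_add le_rfl ?_)
    refine le_trans (trans_le _ _) (add_le_add le_rfl ?_)
    rw [symm_length]
  have b4 : ∀ u, pathLength ((H.hcomp (Path.Homotopy.refl ρ.symm)).eval u)
      ≤ pathLength γ + (pathLength ρ + pathLength ρ) := by
    intro u
    refine le_trans (hcomp_eval_le _ _ u) ?_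
    have e : (Path.Homotopy.refl ρ.symm).eval u = ρ.symm := rfl
    rw [e, symm_length]
    have h0 : pathLength (H.eval u) ≤ pathLength (γ.trans ρ) := by
      have := hH 0 u (show (0:I) ≤ u from u.2.1)
      rwa [Path.Homotopy.eval_zero] at this
    calc pathLength (H.eval u) + pathLength ρ
        ≤ (pathLength γ + pathLength ρ) + pathLength ρ :=
          add_le_add (le_trans h0 (trans_le _ _)) le_rfl
      _ = pathLength γ + (pathLength ρ + pathLength ρ) := by rw [add_assoc]
  intro s
  exact trans_eval_le _ _ b1
    (fun u => trans_eval_le _ _ b2 (fun v => trans_eval_le _ _ b3 b4 v) u) s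

end ObstructingAux

end

/-- Let `M` be a closed Riemannian manifold, let `x` and `y` be points of
`M`, and fix a minimizing geodesic `ρ` from `x` to `y`.  If two loops `γ₁` and `γ₂` based
at `x` have the same obstructing geodesic `τ`, then `γ₁` and `γ₂` can be connected by a
homotopy through loops based at `x` of length at most
`max {length(γ₁), length(γ₂)} + 2 · dist(x,y)`. -/
theorem loops_with_same_obstructing_geodesic_homotopic
    {n : ℕ} {M : Type*} [MetricSpace M] [CompactSpace M]
    [ChartedSpace (EuclideanSpace ℝ (Fin n)) M]
    [IsManifold (𝓡 n) (⊤ : ℕ∞) M]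
    (hgeo : ∀ a b : M, ∃ γ : Path a b,
      IsGeodesic γ ∧ pathLength γ = ENNReal.ofReal (dist a b))
    (x y : M) (ρ : Path x y)
    (hρ : IsGeodesic ρ) (hρmin : pathLength ρ = ENNReal.ofReal (dist x y))
    (γ₁ γ₂ : Path x x) (τ : Path x y)
    (h₁ : IsObstructingGeodesic γ₁ ρ τ)
    (h₂ : IsObstructingGeodesic γ₂ ρ τ) :
    ∃ H : Path.Homotopy γ₁ γ₂,
      ∀ s : I, pathLength (H.eval s) ≤
        max (pathLength γ₁) (pathLength γ₂) + ENNReal.ofReal (2 * dist x y) := by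
  obtain ⟨_, H₁, hH₁⟩ := h₁
  obtain ⟨_, H₂, hH₂⟩ := h₂
  obtain ⟨K₁, hK₁⟩ := ObstructingAux.side ρ γ₁ τ H₁ hH₁
  obtain ⟨K₂, hK₂⟩ := ObstructingAux.side ρ γ₂ τ H₂ hH₂
  refine ⟨K₁.trans K₂.symm, ?_⟩
  have hd : ENNReal.ofReal (2 * dist x y)
      = ENNReal.ofReal (dist x y) + ENNReal.ofReal (dist x y) := by
    rw [two_mul, ENNReal.ofReal_add dist_nonneg dist_nonneg]
  have hB1 : ∀ u, pathLength (K₁.eval u)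
      ≤ max (pathLength γ₁) (pathLength γ₂) + ENNReal.ofReal (2 * dist x y) := by
    intro u
    refine le_trans (hK₁ u) ?_
    rw [hd]
    exact add_le_add (le_max_left _ _) (by rw [hρmin])
  have hB2 : ∀ u, pathLength (K₂.symm.eval u)
      ≤ max (pathLength γ₁) (pathLength γ₂) + ENNReal.ofReal (2 * dist x y) := by
    intro u
    rw [ObstructingAux.symm_eval]
    refine le_trans (hK₂ _) ?_
    rw [hd]
    exact add_le_add (le_max_right _ _) (by rw [hρmin])
  intro s
  exact ObstructingAux.trans_eval_le _ _ hB1 hB2 s
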